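/- For every integer L ≥ 2 and every real p with 0 < p ≤ 1, the expected value of Δ(Δ−1)/2 over a decision stage when an L-packet source is scheduled equals L(L−1)/(2p): ∑_{l=1}^{∞} (l(l−1)/2) · (p · p_l^{(L)} + (1−p) · 1{l = 1}) = L(L−1)/(2p). -/

import Mathlib

/-- Shifted negative-binomial pmf. -/
noncomputable def pnb (p : ℝ) (L l : ℕ) : ℝ :=
  if L ≤ l then ((l - 2).choose (L - 2) : ℝ) * p ^ (L - 1) * (1 - p) ^ (l - L) else 0

/-- The expected value of `Δ(Δ-1)/2` over a decision stage when an `L`-packet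
source is scheduled equals `L(L-1)/(2p)`, where the stage length `Δ` equals `l`
with probability `p · pnb p L l + (1-p)·1{l = 1}`. -/
theorem expected_stage_quadratic (p : ℝ) (hp0 : 0 < p) (hp1 : p ≤ 1) (L : ℕ) (hL : 2 ≤ L) :
    ∑' l : ℕ, (l : ℝ) * ((l : ℝ) - 1) / 2 *
        (p * pnb p L l + (1 - p) * (if l = 1 then 1 else 0))
      = (L : ℝ) * ((L : ℝ) - 1) / (2 * p) := by
  set f : ℕ → ℝ := fun l => (l : ℝ) * ((l : ℝ) - 1) / 2 *
      (p * pnb p L l + (1 - p) * (if l = 1 then 1 else 0)) with hf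
  have hx : ‖(1 - p)‖ < 1 := by
    rw [Real.norm_eq_abs, abs_lt]; constructor <;> linarith
  have hgeo := hasSum_choose_mul_geometric_of_norm_lt_one (𝕜 := ℝ) L hx
  have hp1x : 1 - (1 - p) = p := by ring
  rw [hp1x] at hgeo
  set c : ℝ := (L.choose 2 : ℝ) * p ^ L with hc
  have hmul := hgeo.mul_left c
  have hkey : (fun n => f (n + L)) = fun n => c * (((n + L).choose L : ℝ) * (1 - p) ^ n) := by
    funext n
    have hne : n + L ≠ 1 := by omega
    have hle : L ≤ n + L := by omega
    simp only [hf, pnb, if_pos hle, if_neg hne, mul_zero, add_zero]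
    have hsub : n + L - L = n := by omega
    rw [hsub]
    have hid : (n + L).choose L * L.choose 2 = (n + L).choose 2 * (n + L - 2).choose (L - 2) :=
      Nat.choose_mul hL
    have hid' : ((n + L).choose L : ℝ) * (L.choose 2 : ℝ)
        = ((n + L).choose 2 : ℝ) * ((n + L - 2).choose (L - 2) : ℝ) := by
      exact_mod_cast congrArg (Nat.cast : ℕ → ℝ) hid
    have h2 : ((n + L).choose 2 : ℝ) = ((n + L : ℕ) : ℝ) * (((n + L : ℕ) : ℝ) - 1) / 2 :=
      Nat.cast_choose_two (K := ℝ) _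
    have hL1 : ((n + L : ℕ) : ℝ) - 1 = ((n + L : ℕ) : ℝ) - 1 := rfl
    have hpL : p * p ^ (L - 1) = p ^ L := by
      rw [← pow_succ']
      congr 1
      omega
    push_cast at h2 hid' ⊢
    linear_combination ((↑n + ↑L) * (↑n + ↑L - 1) / 2 * ((n + L - 2).choose (L - 2) : ℝ)
        * (1 - p) ^ n) * hpL - (p ^ L * (1 - p) ^ n) * hid'
      - (p ^ L * (1 - p) ^ n * ((n + L - 2).choose (L - 2) : ℝ)) * h2
  have hfs : HasSum f (c * (1 / p ^ (L + 1)) + ∑ i ∈ Finset.range L, f i) := by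
    exact (hasSum_nat_add_iff L).mp (by rw [hkey]; exact hmul)
  have hz : ∑ i ∈ Finset.range L, f i = 0 := by
    apply Finset.sum_eq_zero
    intro i hi
    rw [Finset.mem_range] at hi
    simp only [hf, pnb]
    rw [if_neg (by omega)]
    rcases eq_or_ne i 1 with h1 | h1
    · subst h1; norm_num
    · rw [if_neg h1]; ring
  rw [hz, add_zero] at hfs
  rw [hfs.tsum_eq]
  have hch : (L.choose 2 : ℝ) = (L : ℝ) * ((L : ℝ) - 1) / 2 := Nat.cast_choose_two (K := ℝ) L
  rw [hc, hch]
  have hpne : p ≠ 0 := ne_of_gt hp0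
  field_simp
  ring
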